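/- In the same setting, if α ≥ s then M_{α,p} is bounded from L^p(Ω) to L^∞(∂Ω): M_{α,p} f(z) ≤ C ‖f‖_{L^p(Ω)} for every z ∈ ∂Ω. Moreover, for α ∈ [θ, s), M_{α,p} is bounded from weak-L^{ps/α}(Ω) to L^∞(∂Ω). -/

import Mathlib

open MeasureTheory Metric Set ENNReal

variable {X : Type*} [MeasurableSpace X] [PseudoMetricSpace X]

/-- The fractional maximal operator
`M_{α,p} f(z) = sup_{0<r<2 diam F} (r^α ⨍_{B(z,r)∩Ω} |f|^p dμ)^{1/p}`. -/
noncomputable def fracMax (μ : Measure X) (Ω F : Set X) (α p : ℝ)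
    (f : X → ℝ) (z : X) : ℝ :=
  ⨆ r ∈ Set.Ioo (0 : ℝ) (2 * diam F),
    (r ^ α * ⨍ x in Metric.ball z r ∩ Ω, |f x| ^ p ∂μ) ^ (1 / p)

/-- In the same setting: if `α ≥ s` then `M_{α,p} : L^p(Ω) → L^∞(∂Ω)` is bounded
pointwise everywhere on `∂Ω`; and for `θ ≤ α < s`, `M_{α,p}` is bounded from
`weak-L^{ps/α}(Ω)` to `L^∞(∂Ω)`. -/
theorem fracMax_linfty_bounds {μ : Measure X} {Ω : Set X}
    (hΩopen : IsOpen Ω) (hΩconn : IsConnected Ω)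
    (hΩbdd : Bornology.IsBounded Ω)
    (Cd : ℝ≥0∞) (hCd : Cd < ∞)
    (hdbl : ∀ x ∈ closure Ω, ∀ r : ℝ, 0 < r →
      μ (ball x (2 * r) ∩ Ω) ≤ Cd * μ (ball x r ∩ Ω) ∧
        0 < μ (ball x r ∩ Ω) ∧ μ (ball x r ∩ Ω) < ∞)
    (s cs : ℝ) (hcs : 0 < cs)
    (hmass : ∀ z ∈ closure Ω, ∀ r : ℝ, 0 < r → r < 2 * diam (frontier Ω) →
      ENNReal.ofReal (cs * r ^ s) ≤ μ (ball z r ∩ Ω))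
    (θ p α : ℝ) (hθ : 0 < θ) (hθα : θ ≤ α) (hp : 1 ≤ p) :
    (s ≤ α →
      ∃ C : ℝ, 0 < C ∧ ∀ f : X → ℝ, MemLp f (ENNReal.ofReal p) (μ.restrict Ω) →
        ∀ z ∈ frontier Ω,
          ENNReal.ofReal (fracMax μ Ω (frontier Ω) α p f z)
            ≤ ENNReal.ofReal C * eLpNorm f (ENNReal.ofReal p) (μ.restrict Ω)) ∧
    (α < s →
      ∃ C : ℝ, 0 < C ∧ ∀ (f : X → ℝ) (M : ℝ), 0 ≤ M →
        (∀ lam : ℝ, 0 < lam →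
          ENNReal.ofReal lam *
              (μ.restrict Ω) {x | lam < |f x|} ^ (α / (p * s)) ≤ ENNReal.ofReal M) →
        ∀ z ∈ frontier Ω, fracMax μ Ω (frontier Ω) α p f z ≤ C * M) := by
  have hp0 : (0:ℝ) < p := lt_of_lt_of_le one_pos hp
  have hα0 : (0:ℝ) < α := lt_of_lt_of_le hθ hθα
  constructor
  · -- Part 1 : s ≤ α
    intro hsα
    set c1 : ℝ := (max 1 ((2 * diam (frontier Ω)) ^ (α - s)) / cs) ^ (1/p) with hc1
    have hc10 : (0:ℝ) < c1 :=
      Real.rpow_pos_of_pos (div_pos (lt_of_lt_of_le one_pos (le_max_left _ _)) hcs) _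
    refine ⟨c1, hc10, ?_⟩
    intro f hf z hz
    have hz' : z ∈ closure Ω := frontier_subset_closure hz
    set N := eLpNorm f (ENNReal.ofReal p) (μ.restrict Ω) with hNdef
    have hNtop : N ≠ ∞ := hf.eLpNorm_lt_top.ne
    have hpne0 : (ENNReal.ofReal p) ≠ 0 := by
      simp only [ne_eq, ENNReal.ofReal_eq_zero, not_le]; linarith
    have hint : Integrable (fun x => |f x| ^ p) (μ.restrict Ω) := by
      have := hf.integrable_norm_rpow hpne0 ENNReal.ofReal_ne_top
      simpa [ENNReal.toReal_ofReal hp0.le, Real.norm_eq_abs] using this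
    set L : ℝ≥0∞ := ∫⁻ x in Ω, ENNReal.ofReal (|f x| ^ p) ∂μ with hLdef
    have hNL : N = L ^ (1/p) := by
      rw [hNdef, eLpNorm_eq_lintegral_rpow_enorm_toReal hpne0 ENNReal.ofReal_ne_top,
        ENNReal.toReal_ofReal hp0.le]
      congr 1
      refine lintegral_congr fun x => ?_
      rw [Real.enorm_eq_ofReal_abs, ENNReal.ofReal_rpow_of_nonneg (abs_nonneg _) hp0.le]
    have hLtop : L ≠ ∞ := by
      intro h
      rw [hNL, h, ENNReal.top_rpow_of_pos (by positivity : (0:ℝ) < 1/p)] at hNtop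
      exact hNtop rfl
    have hNp : N.toReal ^ p = L.toReal := by
      rw [hNL, ← ENNReal.toReal_rpow, ← Real.rpow_mul ENNReal.toReal_nonneg,
        one_div_mul_cancel hp0.ne', Real.rpow_one]
    have key : fracMax μ Ω (frontier Ω) α p f z ≤ c1 * N.toReal := by
      have hCN : 0 ≤ c1 * N.toReal := mul_nonneg hc10.le ENNReal.toReal_nonneg
      unfold fracMax
      refine Real.iSup_le (fun r => Real.iSup_le (fun hr => ?_) hCN) hCN
      obtain ⟨hr0, hrD⟩ := hr
      obtain ⟨-, hm0, hmtop⟩ := hdbl z hz' r hr0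
      have hmlow : cs * r ^ s ≤ (μ (ball z r ∩ Ω)).toReal := by
        have h1 := ENNReal.toReal_mono hmtop.ne (hmass z hz' r hr0 hrD)
        rwa [ENNReal.toReal_ofReal (by positivity)] at h1
      have hmt0 : 0 < (μ (ball z r ∩ Ω)).toReal := lt_of_lt_of_le (by positivity) hmlow
      have hI0 : 0 ≤ ∫ x in ball z r ∩ Ω, |f x| ^ p ∂μ :=
        integral_nonneg fun x => by positivity
      have hIL : ∫ x in ball z r ∩ Ω, |f x| ^ p ∂μ ≤ L.toReal := by
        have h1 : ENNReal.ofReal (∫ x in ball z r ∩ Ω, |f x| ^ p ∂μ) ≤ L := by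
          rw [ofReal_integral_eq_lintegral_ofReal
            (MeasureTheory.IntegrableOn.mono_set hint inter_subset_right)
            (Filter.Eventually.of_forall fun x => by positivity)]
          exact lintegral_mono' (Measure.restrict_mono inter_subset_right le_rfl) le_rfl
        have h2 := ENNReal.toReal_mono hLtop h1
        rwa [ENNReal.toReal_ofReal hI0] at h2
      rw [setAverage_eq, smul_eq_mul]
      have hstep : r ^ α * ((μ (ball z r ∩ Ω)).toReal⁻¹ * ∫ x in ball z r ∩ Ω, |f x| ^ p ∂μ)
          ≤ max 1 ((2 * diam (frontier Ω)) ^ (α - s)) / cs * N.toReal ^ p := by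
        have h2 : (μ (ball z r ∩ Ω)).toReal⁻¹ ≤ (cs * r ^ s)⁻¹ :=
          inv_anti₀ (by positivity) hmlow
        have h3 : (μ (ball z r ∩ Ω)).toReal⁻¹ * (∫ x in ball z r ∩ Ω, |f x| ^ p ∂μ)
            ≤ (cs * r ^ s)⁻¹ * L.toReal :=
          mul_le_mul h2 hIL hI0 (by positivity)
        have h4 := mul_le_mul_of_nonneg_left h3 (Real.rpow_nonneg hr0.le α)
        refine le_trans h4 ?_
        have h5 : r ^ α * ((cs * r ^ s)⁻¹ * L.toReal) = (r ^ (α - s) / cs) * L.toReal := by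
          rw [Real.rpow_sub hr0, mul_inv]
          ring
        rw [h5, hNp]
        have h6 : r ^ (α - s) ≤ max 1 ((2 * diam (frontier Ω)) ^ (α - s)) :=
          le_trans (Real.rpow_le_rpow hr0.le hrD.le (by linarith)) (le_max_right _ _)
        gcongr
      calc (r ^ α * ((μ (ball z r ∩ Ω)).toReal⁻¹ * ∫ x in ball z r ∩ Ω, |f x| ^ p ∂μ)) ^ (1/p)
          ≤ (max 1 ((2 * diam (frontier Ω)) ^ (α - s)) / cs * N.toReal ^ p) ^ (1/p) := by
            apply Real.rpow_le_rpow _ hstep (by positivity)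
            exact mul_nonneg (Real.rpow_nonneg hr0.le _)
              (mul_nonneg (inv_nonneg.2 ENNReal.toReal_nonneg) hI0)
        _ = c1 * N.toReal := by
            rw [hc1, Real.mul_rpow (by positivity) (Real.rpow_nonneg ENNReal.toReal_nonneg _),
              ← Real.rpow_mul ENNReal.toReal_nonneg, mul_one_div_cancel hp0.ne', Real.rpow_one]
    calc ENNReal.ofReal (fracMax μ Ω (frontier Ω) α p f z)
        ≤ ENNReal.ofReal (c1 * N.toReal) := ENNReal.ofReal_le_ofReal key
      _ = ENNReal.ofReal c1 * N := by
          rw [ENNReal.ofReal_mul hc10.le, ENNReal.ofReal_toReal hNtop]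
  · -- Part 2 : α < s
    intro hαs
    have hs0 : (0:ℝ) < s := lt_trans hα0 hαs
    set q : ℝ := p * s / α with hqdef
    have hq0 : (0:ℝ) < q := by positivity
    have hpq : p < q := by
      rw [hqdef, lt_div_iff₀ hα0]; nlinarith
    have hqp0 : (0:ℝ) < q - p := sub_pos.2 hpq
    set K : ℝ := 1 + p / (q - p) with hKdef
    have hK0 : (0:ℝ) < K := by positivity
    have hpq' : p / q = α / s := by
      rw [hqdef]
      field_simp
    have hqe : -(1/q) * p = -(α/s) := by rw [← hpq']; ring
    have hqe2 : -(1/q) * (p - q) = 1 - α/s := by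
      rw [← hpq']
      field_simp
      ring
    have hiq : α / (p * s) = 1/q := by
      rw [hqdef]
      field_simp
    have efin : ∀ A : ℝ, p * (A / p + A / (q - p)) = K * A := fun A => by
      rw [hKdef]; field_simp
    set c2 : ℝ := (K * cs ^ (-(α/s))) ^ (1/p) with hc2
    have hcspow : (0:ℝ) < cs ^ (-(α/s)) := Real.rpow_pos_of_pos hcs _
    have hc20 : (0:ℝ) < c2 := Real.rpow_pos_of_pos (by positivity) _
    refine ⟨c2, hc20, ?_⟩
    intro f M hM hweak z hz
    have hz' : z ∈ closure Ω := frontier_subset_closure hz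
    have hCM0 : 0 ≤ c2 * M := mul_nonneg hc20.le hM
    unfold fracMax
    refine Real.iSup_le (fun r => Real.iSup_le (fun hr => ?_) hCM0) hCM0
    obtain ⟨hr0, hrD⟩ := hr
    obtain ⟨-, hm0, hmtop⟩ := hdbl z hz' r hr0
    set mt : ℝ := (μ (ball z r ∩ Ω)).toReal with hmtdef
    have hmlow : cs * r ^ s ≤ mt := by
      have h1 := ENNReal.toReal_mono hmtop.ne (hmass z hz' r hr0 hrD)
      rwa [ENNReal.toReal_ofReal (by positivity)] at h1
    have hmt0 : 0 < mt := lt_of_lt_of_le (by positivity) hmlow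
    rw [setAverage_eq, smul_eq_mul]
    set I : ℝ := ∫ x in ball z r ∩ Ω, |f x| ^ p ∂μ with hIdef
    have hI0 : 0 ≤ I := integral_nonneg fun x => by positivity
    -- key estimate
    have hIkey : I ≤ K * M ^ p * mt ^ (1 - α / s) := by
      rcases eq_or_lt_of_le hM with hM0 | hM0
      · -- M = 0
        have hnull : (μ.restrict Ω) {x | 0 < |f x|} = 0 := by
          have hsub : {x | 0 < |f x|} ⊆ ⋃ n : ℕ, {x | 1/((n:ℝ)+1) < |f x|} := by
            intro x hx
            obtain ⟨n, hn⟩ := exists_nat_one_div_lt (show (0:ℝ) < |f x| from hx)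
            exact mem_iUnion.2 ⟨n, hn⟩
          refine measure_mono_null hsub (measure_iUnion_null fun n => ?_)
          have hlam : (0:ℝ) < 1/((n:ℝ)+1) := by positivity
          have h2 := hweak _ hlam
          rw [← hM0] at h2
          simp only [ENNReal.ofReal_zero, nonpos_iff_eq_zero, mul_eq_zero] at h2
          rcases h2 with h2 | h2
          · exact absurd h2 (by
              simp only [ne_eq, ENNReal.ofReal_eq_zero, not_le]
              positivity)
          · rcases ENNReal.rpow_eq_zero_iff.1 h2 with ⟨h3, -⟩ | ⟨-, h4⟩
            · exact h3
            · exfalso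
              have : (0:ℝ) < α / (p * s) := by positivity
              linarith
        have hnull2 : (μ.restrict (ball z r ∩ Ω)) {x | 0 < |f x|} = 0 :=
          le_antisymm (le_trans (Measure.le_iff'.1
            (Measure.restrict_mono inter_subset_right le_rfl) _) hnull.le) zero_le
        have hf0 : (fun x => |f x| ^ p) =ᵐ[μ.restrict (ball z r ∩ Ω)] 0 := by
          rw [Filter.EventuallyEq, ae_iff]
          refine measure_mono_null ?_ hnull2
          intro x hx
          simp only [mem_setOf_eq, Pi.zero_apply] at hx ⊢
          rcases lt_or_eq_of_le (abs_nonneg (f x)) with h | h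
          · exact h
          · exact absurd (by rw [← h, Real.zero_rpow hp0.ne']) hx
        have hIz : I = 0 := by
          rw [hIdef]
          exact integral_eq_zero_of_ae hf0
        rw [hIz, ← hM0, Real.zero_rpow hp0.ne']
        simp
      · -- M > 0
        by_cases hint : Integrable (fun x => |f x| ^ p) (μ.restrict (ball z r ∩ Ω))
        · -- integrable case: layer cake
          set ν := μ.restrict (ball z r ∩ Ω) with hνdef
          have hg : AEMeasurable (fun x => |f x|) ν := by
            have h1 : AEMeasurable (fun x => |f x| ^ p) ν := hint.aemeasurable
            have h2 : AEMeasurable (fun x => (|f x| ^ p) ^ p⁻¹) ν := h1.pow aemeasurable_const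
            exact h2.congr (Filter.Eventually.of_forall fun x =>
              Real.rpow_rpow_inv (abs_nonneg _) hp0.ne')
          set t₀ : ℝ := M * mt ^ (-(1/q)) with ht₀def
          have ht₀ : 0 < t₀ := by positivity
          have hW : ∀ t : ℝ, 0 < t → ν {x | t < |f x|} ≤ ENNReal.ofReal ((M / t) ^ q) := by
            intro t ht
            have h1 : ν {x | t < |f x|} ≤ (μ.restrict Ω) {x | t < |f x|} :=
              Measure.le_iff'.1 (Measure.restrict_mono inter_subset_right le_rfl) _
            have h2 := hweak t ht
            rw [hiq] at h2
            have h3 : (μ.restrict Ω) {x | t < |f x|} ^ (1/q)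
                ≤ ENNReal.ofReal M / ENNReal.ofReal t := by
              rw [ENNReal.le_div_iff_mul_le
                (Or.inl (by simp only [ne_eq, ENNReal.ofReal_eq_zero, not_le]; linarith))
                (Or.inl ENNReal.ofReal_ne_top)]
              rwa [mul_comm] at h2
            have h4 := ENNReal.rpow_le_rpow h3 hq0.le
            rw [← ENNReal.rpow_mul, one_div, inv_mul_cancel₀ hq0.ne', ENNReal.rpow_one] at h4
            have h5 : (ENNReal.ofReal M / ENNReal.ofReal t) ^ q
                = ENNReal.ofReal ((M/t)^q) := by
              rw [← ENNReal.ofReal_div_of_pos ht,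
                ENNReal.ofReal_rpow_of_nonneg (by positivity) hq0.le]
            exact le_trans h1 (h5 ▸ h4)
          have hof : ENNReal.ofReal I = ENNReal.ofReal p *
              ∫⁻ t in Ioi (0:ℝ), ν {x | t < |f x|} * ENNReal.ofReal (t ^ (p-1)) := by
            rw [hIdef]
            rw [ofReal_integral_eq_lintegral_ofReal hint
              (Filter.Eventually.of_forall fun x => by positivity)]
            exact lintegral_rpow_eq_lintegral_meas_lt_mul ν
              (Filter.Eventually.of_forall fun x => abs_nonneg _) hg hp0
          have hsplit : (∫⁻ t in Ioi (0:ℝ), ν {x | t < |f x|} * ENNReal.ofReal (t ^ (p-1)))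
              = (∫⁻ t in Ioc (0:ℝ) t₀, ν {x | t < |f x|} * ENNReal.ofReal (t ^ (p-1)))
                + ∫⁻ t in Ioi t₀, ν {x | t < |f x|} * ENNReal.ofReal (t ^ (p-1)) := by
            rw [← Ioc_union_Ioi_eq_Ioi ht₀.le,
              lintegral_union measurableSet_Ioi (Ioc_disjoint_Ioi le_rfl)]
          have hT1 : (∫⁻ t in Ioc (0:ℝ) t₀, ν {x | t < |f x|} * ENNReal.ofReal (t ^ (p-1)))
              ≤ ENNReal.ofReal mt * ENNReal.ofReal (t₀ ^ p / p) := by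
            have hb : ∀ t : ℝ, ν {x | t < |f x|} * ENNReal.ofReal (t^(p-1))
                ≤ ENNReal.ofReal mt * ENNReal.ofReal (t^(p-1)) := by
              intro t
              apply mul_le_mul_left
              calc ν {x | t < |f x|} ≤ ν univ := measure_mono (subset_univ _)
                _ = μ (ball z r ∩ Ω) := Measure.restrict_apply_univ _
                _ = ENNReal.ofReal mt := by rw [hmtdef, ENNReal.ofReal_toReal hmtop.ne]
            refine le_trans (lintegral_mono hb) ?_
            rw [lintegral_const_mul' _ _ ENNReal.ofReal_ne_top]
            have hintg : IntegrableOn (fun t : ℝ => t ^ (p-1)) (Ioc 0 t₀) volume :=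
              (intervalIntegral.intervalIntegrable_rpow' (by linarith)).1
            have hnn : 0 ≤ᵐ[volume.restrict (Ioc (0:ℝ) t₀)] fun t : ℝ => t ^ (p-1) := by
              filter_upwards [ae_restrict_mem measurableSet_Ioc] with t ht
              exact Real.rpow_nonneg ht.1.le _
            have hX : (∫⁻ t in Ioc (0:ℝ) t₀, ENNReal.ofReal (t^(p-1)))
                = ENNReal.ofReal (t₀ ^ p / p) := by
              rw [← ofReal_integral_eq_lintegral_ofReal hintg hnn]
              congr 1
              rw [← intervalIntegral.integral_of_le ht₀.le,
                integral_rpow (Or.inl (by linarith : (-1:ℝ) < p - 1))]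
              rw [show p - 1 + 1 = p by ring, Real.zero_rpow hp0.ne', sub_zero]
            rw [hX]
          have hT2 : (∫⁻ t in Ioi t₀, ν {x | t < |f x|} * ENNReal.ofReal (t ^ (p-1)))
              ≤ ENNReal.ofReal (M ^ q * (t₀ ^ (p - q) / (q - p))) := by
            have hb : ∀ᵐ t ∂(volume.restrict (Ioi t₀)),
                ν {x | t < |f x|} * ENNReal.ofReal (t^(p-1))
                  ≤ ENNReal.ofReal (M ^ q * t ^ (p - 1 - q)) := by
              filter_upwards [ae_restrict_mem measurableSet_Ioi] with t ht
              have ht0 : 0 < t := lt_trans ht₀ ht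
              calc ν {x | t < |f x|} * ENNReal.ofReal (t^(p-1))
                  ≤ ENNReal.ofReal ((M/t)^q) * ENNReal.ofReal (t^(p-1)) :=
                    mul_le_mul_left (hW t ht0) _
                _ = ENNReal.ofReal ((M/t)^q * t^(p-1)) :=
                    (ENNReal.ofReal_mul (by positivity)).symm
                _ = ENNReal.ofReal (M^q * t^(p-1-q)) := by
                    congr 1
                    rw [Real.div_rpow hM0.le ht0.le,
                      show p - 1 - q = p - 1 - q by rfl, Real.rpow_sub ht0 (p-1) q]
                    ring
            refine le_trans (lintegral_mono_ae hb) ?_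
            have hintg2 : IntegrableOn (fun t : ℝ => M ^ q * t ^ (p-1-q)) (Ioi t₀) volume :=
              (integrableOn_Ioi_rpow_of_lt (by linarith) ht₀).const_mul _
            have hnn2 : 0 ≤ᵐ[volume.restrict (Ioi t₀)] fun t : ℝ => M ^ q * t ^ (p-1-q) := by
              filter_upwards [ae_restrict_mem measurableSet_Ioi] with t ht
              have ht0 : 0 < t := lt_trans ht₀ ht
              positivity
            rw [← ofReal_integral_eq_lintegral_ofReal hintg2 hnn2]
            apply ENNReal.ofReal_le_ofReal
            rw [MeasureTheory.integral_const_mul, integral_Ioi_rpow_of_lt (by linarith) ht₀]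
            rw [show p - 1 - q + 1 = p - q by ring]
            rw [show q - p = -(p - q) by ring, div_neg, ← neg_div]
          have hsum : ENNReal.ofReal I ≤ ENNReal.ofReal (K * M ^ p * mt ^ (1 - α/s)) := by
            rw [hof, hsplit]
            refine le_trans (mul_le_mul_right (add_le_add hT1 hT2) _) ?_
            rw [← ENNReal.ofReal_mul hmt0.le,
              ← ENNReal.ofReal_add (by positivity) (by positivity),
              ← ENNReal.ofReal_mul hp0.le]
            apply ENNReal.ofReal_le_ofReal
            -- real algebra
            have e0 : mt * mt ^ (-(α/s)) = mt ^ (1 - α/s) := by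
              rw [show (1 : ℝ) - α/s = 1 + -(α/s) by ring, Real.rpow_add hmt0, Real.rpow_one]
            have e1 : mt * (t₀ ^ p / p) = M ^ p * mt ^ (1 - α/s) / p := by
              rw [ht₀def, Real.mul_rpow hM0.le (Real.rpow_nonneg hmt0.le _),
                ← Real.rpow_mul hmt0.le, hqe, ← e0]
              ring
            have e3 : M ^ q * M ^ (p - q) = M ^ p := by
              rw [← Real.rpow_add hM0, show q + (p - q) = p by ring]
            have e2 : M ^ q * (t₀ ^ (p - q) / (q - p)) = M ^ p * mt ^ (1 - α/s) / (q - p) := by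
              rw [ht₀def, Real.mul_rpow hM0.le (Real.rpow_nonneg hmt0.le _),
                ← Real.rpow_mul hmt0.le, hqe2, ← e3]
              ring
            rw [e1, e2, efin (M ^ p * mt ^ (1 - α/s))]
            exact le_of_eq (by ring)
          exact (ENNReal.ofReal_le_ofReal_iff (by positivity)).1 hsum
        · -- not integrable: the integral is zero
          rw [hIdef, integral_undef hint]
          positivity
    -- conclude
    have hbase : r ^ α * (mt⁻¹ * I) ≤ K * cs ^ (-(α/s)) * M ^ p := by
      have h1 : mt ^ (1 - α/s) * mt⁻¹ = mt ^ (-(α/s)) := by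
        rw [← Real.rpow_neg_one mt, ← Real.rpow_add hmt0,
          show 1 - α/s + (-1) = -(α/s) by ring]
      have h2 : mt ^ (-(α/s)) ≤ (cs * r ^ s) ^ (-(α/s)) :=
        Real.rpow_le_rpow_of_nonpos (by positivity) hmlow
          (neg_nonpos.2 (by positivity))
      have h3 : (cs * r ^ s) ^ (-(α/s)) = cs ^ (-(α/s)) * r ^ (-α) := by
        rw [Real.mul_rpow hcs.le (Real.rpow_nonneg hr0.le _)]
        congr 1
        rw [← Real.rpow_mul hr0.le]
        congr 1
        field_simp
      have hkey2 : mt ^ (1 - α/s) * mt⁻¹ ≤ cs ^ (-(α/s)) * r ^ (-α) := by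
        rw [h1, ← h3]; exact h2
      calc r ^ α * (mt⁻¹ * I)
          ≤ r ^ α * (mt⁻¹ * (K * M ^ p * mt ^ (1 - α/s))) := by
            refine mul_le_mul_of_nonneg_left ?_ (Real.rpow_nonneg hr0.le α)
            exact mul_le_mul_of_nonneg_left hIkey (inv_nonneg.2 hmt0.le)
        _ = (K * M ^ p) * (mt ^ (1 - α/s) * mt⁻¹) * r ^ α := by ring
        _ ≤ (K * M ^ p) * (cs ^ (-(α/s)) * r ^ (-α)) * r ^ α := by
            have hKM : (0:ℝ) ≤ K * M ^ p := by positivity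
            have := mul_le_mul_of_nonneg_left hkey2 hKM
            exact mul_le_mul_of_nonneg_right this (Real.rpow_nonneg hr0.le α)
        _ = K * cs ^ (-(α/s)) * M ^ p * (r ^ (-α) * r ^ α) := by ring
        _ = K * cs ^ (-(α/s)) * M ^ p := by
            rw [← Real.rpow_add hr0, show -α + α = 0 by ring, Real.rpow_zero, mul_one]
    calc (r ^ α * (mt⁻¹ * I)) ^ (1/p)
        ≤ (K * cs ^ (-(α/s)) * M ^ p) ^ (1/p) := by
          apply Real.rpow_le_rpow _ hbase (by positivity)
          exact mul_nonneg (Real.rpow_nonneg hr0.le _)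
            (mul_nonneg (inv_nonneg.2 hmt0.le) hI0)
      _ = c2 * M := by
          rw [hc2, Real.mul_rpow (by positivity) (Real.rpow_nonneg hM _),
            ← Real.rpow_mul hM, mul_one_div_cancel hp0.ne', Real.rpow_one]
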